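/- Let c be an edge-coloring of K_n with no properly colored path on l vertices, let P = v_1…v_s be a properly colored path of maximum order, and let G be a representing subgraph of the colors not on P chosen to maximize the number of edges joining V(P) to V(K_n)\V(P). Then no vertex u outside P with an edge of G to some other vertex outside P is joined in G to any of v_1, v_2, v_{s-1}, v_s. -/
import Mathlib


/-- The edge-colored `K_n` contains a properly colored path on `l` vertices. -/
def HasPCPath (n l : ℕ) (c : Fin n → Fin n → ℕ) : Prop :=
  ∃ p : Fin l → Fin n, Function.Injective p ∧
    ∀ i : ℕ, (h : i + 2 < l) →
      c (p ⟨i, by omega⟩) (p ⟨i + 1, by omega⟩) ≠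
        c (p ⟨i + 1, by omega⟩) (p ⟨i + 2, h⟩)

/-- `G` is a representing subgraph of the colors of `c` not appearing on the properly
colored path `p` on `s` vertices: every edge of `G` has a color not on `p`, `G` has
exactly one edge of each of its colors, and every color not on `p` appears on an
edge of `G`. -/
def RepresentingSubgraph (n s : ℕ) (c : Fin n → Fin n → ℕ) (p : Fin s → Fin n)
    (G : SimpleGraph (Fin n)) : Prop :=
  (∀ i j : Fin n, G.Adj i j → ∀ k : ℕ, (h : k + 1 < s) →
      c (p ⟨k, by omega⟩) (p ⟨k + 1, h⟩) ≠ c i j) ∧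
  (∀ i j k l : Fin n, G.Adj i j → G.Adj k l → c i j = c k l →
      s(i, j) = s(k, l)) ∧
  (∀ i j : Fin n, i ≠ j →
      (∀ k : ℕ, (h : k + 1 < s) → c (p ⟨k, by omega⟩) (p ⟨k + 1, h⟩) ≠ c i j) →
      ∃ a b : Fin n, G.Adj a b ∧ c a b = c i j)

/-- The number of edges of `G` joining the path `p` to the vertices outside `p`. -/
noncomputable def crossingEdges (n s : ℕ) (p : Fin s → Fin n)
    (G : SimpleGraph (Fin n)) : ℕ :=
  Set.ncard {e : Sym2 (Fin n) | e ∈ G.edgeSet ∧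
    ∃ i j : Fin n, e = s(i, j) ∧ i ∈ Set.range p ∧ j ∉ Set.range p}

lemma prepend_pc {n s : ℕ} (hs : 2 ≤ s) (c : Fin n → Fin n → ℕ)
    (q : Fin s → Fin n) (hq : Function.Injective q)
    (hpc : ∀ i : ℕ, (h : i + 2 < s) →
      c (q ⟨i, by omega⟩) (q ⟨i + 1, by omega⟩) ≠ c (q ⟨i + 1, by omega⟩) (q ⟨i + 2, h⟩))
    (u : Fin n) (hu : u ∉ Set.range q)
    (hc : c u (q ⟨0, by omega⟩) ≠ c (q ⟨0, by omega⟩) (q ⟨1, by omega⟩)) :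
    HasPCPath n (s + 1) c := by
  refine ⟨fun i => if h : i.val = 0 then u else q ⟨i.val - 1, by omega⟩, ?_, ?_⟩
  · intro a b hab
    by_cases ha : a.val = 0 <;> by_cases hb : b.val = 0
    · exact Fin.ext (by omega)
    · simp only [ha, hb, dif_pos, dif_neg, not_false_iff] at hab
      exact absurd ⟨_, hab.symm⟩ hu
    · simp only [ha, hb, dif_pos, dif_neg, not_false_iff] at hab
      exact absurd ⟨_, hab⟩ hu
    · simp only [ha, hb, dif_neg, not_false_iff] at hab
      have := hq hab
      have := Fin.mk.injEq _ _ _ _ ▸ this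
      exact Fin.ext (by omega)
  · intro i h
    match i with
    | 0 => simpa using hc
    | (k+1) =>
      have hk : k + 2 < s := by omega
      simpa using hpc k hk

lemma prepend2_pc {n s : ℕ} (hs : 2 ≤ s) (c : Fin n → Fin n → ℕ)
    (q : Fin s → Fin n) (hq : Function.Injective q)
    (hpc : ∀ i : ℕ, (h : i + 2 < s) →
      c (q ⟨i, by omega⟩) (q ⟨i + 1, by omega⟩) ≠ c (q ⟨i + 1, by omega⟩) (q ⟨i + 2, h⟩))
    (u w : Fin n) (hu : u ∉ Set.range q) (hw : w ∉ Set.range q) (huw : u ≠ w)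
    (hc0 : c w u ≠ c u (q ⟨1, by omega⟩))
    (hc1 : ∀ h : 2 < s, c u (q ⟨1, by omega⟩) ≠ c (q ⟨1, by omega⟩) (q ⟨2, h⟩)) :
    HasPCPath n (s + 1) c := by
  refine ⟨fun i => if i.val = 0 then w else if i.val = 1 then u else q ⟨i.val - 1, by omega⟩,
    ?_, ?_⟩
  · rintro ⟨a, ha⟩ ⟨b, hb⟩ hab
    rcases a with (_|_|a) <;> rcases b with (_|_|b) <;> simp at hab <;> try rfl
    · exact absurd hab.symm huw
    · exact absurd ⟨_, hab.symm⟩ hw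
    · exact absurd hab huw
    · exact absurd ⟨_, hab.symm⟩ hu
    · exact absurd ⟨_, hab⟩ hw
    · exact absurd ⟨_, hab⟩ hu
    · have := hq hab
      have := Fin.mk.injEq _ _ _ _ ▸ this
      simp only [Fin.mk.injEq]
      omega
  · intro i h
    match i with
    | 0 => simpa using hc0
    | 1 =>
      have h2 : 2 < s := by omega
      simpa using hc1 h2
    | (k+2) =>
      have hk : k + 1 + 2 < s := by omega
      simpa using hpc (k+1) hk

lemma pathc_congr {n s : ℕ} (c : Fin n → Fin n → ℕ) (p : Fin s → Fin n) {a b a' b' : ℕ}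
    {ha : a < s} {hb : b < s} {ha' : a' < s} {hb' : b' < s}
    (h1 : a = a') (h2 : b = b') :
    c (p ⟨a, ha⟩) (p ⟨b, hb⟩) = c (p ⟨a', ha'⟩) (p ⟨b', hb'⟩) := by
  subst h1; subst h2; rfl

lemma rev_path {n s : ℕ} (hs : 2 ≤ s) (c : Fin n → Fin n → ℕ)
    (hsym : ∀ i j, c i j = c j i)
    (p : Fin s → Fin n) (hinj : Function.Injective p)
    (hpc : ∀ i : ℕ, (h : i + 2 < s) →
      c (p ⟨i, by omega⟩) (p ⟨i + 1, by omega⟩) ≠ c (p ⟨i + 1, by omega⟩) (p ⟨i + 2, h⟩)) :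
    ∃ q : Fin s → Fin n, Function.Injective q ∧
      (∀ i : ℕ, (h : i + 2 < s) →
        c (q ⟨i, by omega⟩) (q ⟨i + 1, by omega⟩) ≠ c (q ⟨i + 1, by omega⟩) (q ⟨i + 2, h⟩)) ∧
      q ⟨0, by omega⟩ = p ⟨s - 1, by omega⟩ ∧
      q ⟨1, by omega⟩ = p ⟨s - 2, by omega⟩ ∧
      (∀ h : 2 < s, q ⟨2, h⟩ = p ⟨s - 3, by omega⟩) ∧
      Set.range q ⊆ Set.range p := by
  refine ⟨fun i => p ⟨s - 1 - i.val, by omega⟩, ?_, ?_, ?_, ?_, ?_, ?_⟩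
  · rintro ⟨a, ha⟩ ⟨b, hb⟩ hab
    have h2 : (⟨s - 1 - a, by omega⟩ : Fin s) = ⟨s - 1 - b, by omega⟩ := hinj hab
    rw [Fin.mk.injEq] at h2
    rw [Fin.mk.injEq]
    omega
  · intro i h hEq
    apply hpc (s - 3 - i) (by omega)
    calc c (p ⟨s - 3 - i, by omega⟩) (p ⟨s - 3 - i + 1, by omega⟩)
        = c (p ⟨s - 1 - (i + 2), by omega⟩) (p ⟨s - 1 - (i + 1), by omega⟩) :=
          pathc_congr c p (by omega) (by omega)
      _ = c (p ⟨s - 1 - (i + 1), by omega⟩) (p ⟨s - 1 - (i + 2), by omega⟩) := hsym _ _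
      _ = c (p ⟨s - 1 - i, by omega⟩) (p ⟨s - 1 - (i + 1), by omega⟩) := hEq.symm
      _ = c (p ⟨s - 1 - (i + 1), by omega⟩) (p ⟨s - 1 - i, by omega⟩) := hsym _ _
      _ = c (p ⟨s - 3 - i + 1, by omega⟩) (p ⟨s - 3 - i + 2, by omega⟩) :=
          pathc_congr c p (by omega) (by omega)
  · exact congrArg p (Fin.ext (show s - 1 - 0 = s - 1 by omega))
  · exact congrArg p (Fin.ext (show s - 1 - 1 = s - 2 by omega))
  · intro h; exact congrArg p (Fin.ext (show s - 1 - 2 = s - 3 by omega))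
  · rintro x ⟨i, rfl⟩; exact ⟨_, rfl⟩

/-- Let `c` be an edge-coloring of `K_n` with no properly colored `P_l`, let
`p = v_1 … v_s` be a properly colored path of maximum order, and let `G` be a
representing subgraph of the colors not on `p` chosen with the number of edges
joining `p` to the remaining vertices as large as possible. Then no vertex `u`
outside `p` having a `G`-edge to another vertex outside `p` is joined in `G` to
any of `v_1, v_2, v_{s-1}, v_s`. -/
theorem not_adj_path_ends (n l s : ℕ) (hs : 2 ≤ s)
    (c : Fin n → Fin n → ℕ) (hsym : ∀ i j, c i j = c j i)
    (hno : ¬ HasPCPath n l c) (hsl : s ≤ l - 1)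
    (p : Fin s → Fin n) (hinj : Function.Injective p)
    (hpc : ∀ i : ℕ, (h : i + 2 < s) →
      c (p ⟨i, by omega⟩) (p ⟨i + 1, by omega⟩) ≠
        c (p ⟨i + 1, by omega⟩) (p ⟨i + 2, h⟩))
    (hmax : ∀ t : ℕ, s < t → ¬ HasPCPath n t c)
    (G : SimpleGraph (Fin n)) (hG : RepresentingSubgraph n s c p G)
    (hGmax : ∀ G' : SimpleGraph (Fin n), RepresentingSubgraph n s c p G' →
      crossingEdges n s p G' ≤ crossingEdges n s p G)
    (u : Fin n) (hu : u ∉ Set.range p)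
    (hw : ∃ w : Fin n, w ∉ Set.range p ∧ G.Adj u w) :
    ¬ G.Adj u (p ⟨0, by omega⟩) ∧ ¬ G.Adj u (p ⟨1, by omega⟩) ∧
    ¬ G.Adj u (p ⟨s - 2, by omega⟩) ∧ ¬ G.Adj u (p ⟨s - 1, by omega⟩) := by
  obtain ⟨w, hwr, hGuw⟩ := hw
  have hne : u ≠ w := G.ne_of_adj hGuw
  have hnomore : ¬ HasPCPath n (s + 1) c := hmax (s + 1) (by omega)
  obtain ⟨hG1, hG2, -⟩ := hG
  obtain ⟨q, hqinj, hqpc, hq0, hq1, hq2, hqsub⟩ := rev_path hs c hsym p hinj hpc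
  have huq : u ∉ Set.range q := fun hx => hu (hqsub hx)
  have hwq : w ∉ Set.range q := fun hx => hwr (hqsub hx)
  have sym2 : ∀ v : Fin n, v ∈ Set.range p → G.Adj u v → c w u ≠ c u v := by
    intro v hv hadj hEq
    have h2 := hG2 w u u v hGuw.symm hadj hEq
    rw [Sym2.eq_iff] at h2
    rcases h2 with ⟨h3, h4⟩ | ⟨h3, h4⟩
    · exact hne h3.symm
    · exact hwr (h3 ▸ hv)
  refine ⟨?_, ?_, ?_, ?_⟩ <;> intro hadj <;> apply hnomore
  · -- u adjacent to v₁
    refine prepend_pc hs c p hinj hpc u hu fun hEq => ?_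
    exact hG1 u (p ⟨0, by omega⟩) hadj 0 (by omega) hEq.symm
  · -- u adjacent to v₂
    refine prepend2_pc hs c p hinj hpc u w hu hwr hne
      (sym2 _ ⟨_, rfl⟩ hadj) fun h2 hEq => ?_
    exact hG1 u (p ⟨1, by omega⟩) hadj 1 (by omega) hEq.symm
  · -- u adjacent to v_{s-1}
    refine prepend2_pc hs c q hqinj hqpc u w huq hwq hne ?_ ?_
    · rw [hq1]
      exact sym2 _ ⟨_, rfl⟩ hadj
    · intro h2
      rw [hq1, hq2 h2]
      intro hEq
      apply hG1 u (p ⟨s - 2, by omega⟩) hadj (s - 3) (by omega)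
      calc c (p ⟨s - 3, by omega⟩) (p ⟨s - 3 + 1, by omega⟩)
          = c (p ⟨s - 3, by omega⟩) (p ⟨s - 2, by omega⟩) :=
            pathc_congr c p rfl (by omega)
        _ = c (p ⟨s - 2, by omega⟩) (p ⟨s - 3, by omega⟩) := hsym _ _
        _ = c u (p ⟨s - 2, by omega⟩) := hEq.symm
  · -- u adjacent to v_s
    refine prepend_pc hs c q hqinj hqpc u huq ?_
    rw [hq0, hq1]
    intro hEq
    apply hG1 u (p ⟨s - 1, by omega⟩) hadj (s - 2) (by omega)
    calc c (p ⟨s - 2, by omega⟩) (p ⟨s - 2 + 1, by omega⟩)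
        = c (p ⟨s - 2, by omega⟩) (p ⟨s - 1, by omega⟩) :=
          pathc_congr c p rfl (by omega)
      _ = c (p ⟨s - 1, by omega⟩) (p ⟨s - 2, by omega⟩) := hsym _ _
      _ = c u (p ⟨s - 1, by omega⟩) := hEq.symm
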